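/- arXiv:2303.14039 — 3 statements merged into one kernel-verified Lean document; each statement's English description precedes it below -/
import Mathlib

section
/- Let k ≥ 1 be an integer and let G be a connected finite simple graph on n ≥ 1 vertices with minimum degree at least k. Then there exists a connected subgraph H of G with at most 3·⌊n/(k+1)⌋ − 2 vertices such that every vertex of G is at graph distance at most 2 (in G) from some vertex of H. -/
open SimpleGraph Finset

private lemma two_hop_aux {V : Type*} [Fintype V] [DecidableEq V] (G : SimpleGraph V)
    (hconn : G.Connected) :
    ∀ N : ℕ, ∀ (S : Finset V) (H : G.Subgraph),
      S.Nonempty → ↑S ⊆ H.verts → H.Connected →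
      H.verts.ncard ≤ 3 * S.card - 2 →
      (∀ s ∈ S, ∀ t ∈ S, s ≠ t → 3 ≤ G.dist s t) →
      (Finset.univ.filter (fun v => ∀ s ∈ S, 3 ≤ G.dist s v)).card ≤ N →
      ∃ (S' : Finset V) (H' : G.Subgraph),
        S'.Nonempty ∧ ↑S' ⊆ H'.verts ∧ H'.Connected ∧
        H'.verts.ncard ≤ 3 * S'.card - 2 ∧
        (∀ s ∈ S', ∀ t ∈ S', s ≠ t → 3 ≤ G.dist s t) ∧
        ∀ v : V, ∃ u ∈ S', G.dist u v ≤ 2 := by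
  intro N
  induction N with
  | zero =>
      intro S H hS hSH hHc hcard hpair hU
      refine ⟨S, H, hS, hSH, hHc, hcard, hpair, fun v => ?_⟩
      have hUe := Finset.card_eq_zero.mp (Nat.le_zero.mp hU)
      have hv := Finset.eq_empty_iff_forall_notMem.mp hUe v
      simp only [Finset.mem_filter, Finset.mem_univ, true_and, not_forall] at hv
      obtain ⟨s, hs, hd⟩ := hv
      exact ⟨s, hs, by omega⟩
  | succ N ih =>
      intro S H hS hSH hHc hcard hpair hU
      by_cases hUne : (Finset.univ.filter (fun v => ∀ s ∈ S, 3 ≤ G.dist s v)).Nonempty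
      case neg =>
        refine ih S H hS hSH hHc hcard hpair ?_
        rw [Finset.not_nonempty_iff_eq_empty.mp hUne]
        simp
      case pos =>
        obtain ⟨u, huU, humin⟩ :=
          Finset.exists_min_image _ (fun v => S.inf' hS (fun s => G.dist s v)) hUne
        have huU' : ∀ s ∈ S, 3 ≤ G.dist s u := (Finset.mem_filter.mp huU).2
        have h3le : 3 ≤ S.inf' hS (fun s => G.dist s u) :=
          Finset.le_inf' hS _ (fun s hs => huU' s hs)
        -- show the min is exactly 3
        have hmin3 : S.inf' hS (fun s => G.dist s u) = 3 := by
          by_contra hne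
          have h4 : 4 ≤ S.inf' hS (fun s => G.dist s u) := by omega
          obtain ⟨s0, hs0S, hs0⟩ := Finset.exists_mem_eq_inf' hS (fun s => G.dist s u)
          have hd4 : 4 ≤ G.dist s0 u := by omega
          obtain ⟨p, hp⟩ := hconn.exists_walk_length_eq_dist s0 u
          have hsune : u ≠ s0 := by
            intro h; rw [h] at hd4; simp [SimpleGraph.dist_self] at hd4
          obtain ⟨x, hadj, q, hq⟩ := SimpleGraph.Walk.exists_eq_cons_of_ne hsune p.reverse
          have hqlen : q.length = G.dist s0 u - 1 := by
            have := congrArg SimpleGraph.Walk.length hq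
            simp only [SimpleGraph.Walk.length_reverse, SimpleGraph.Walk.length_cons] at this
            omega
          have hdx : G.dist s0 x ≤ G.dist s0 u - 1 := by
            have := SimpleGraph.dist_le q.reverse
            simpa [SimpleGraph.Walk.length_reverse, hqlen, SimpleGraph.dist_comm] using this
          have hxu : G.dist x u = 1 := SimpleGraph.dist_eq_one_iff_adj.mpr hadj.symm
          have hxU : x ∈ Finset.univ.filter (fun v => ∀ s ∈ S, 3 ≤ G.dist s v) := by
            simp only [Finset.mem_filter, Finset.mem_univ, true_and]
            intro s hs
            have htr : G.dist s u ≤ G.dist s x + G.dist x u := hconn.dist_triangle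
            have hsu : 4 ≤ G.dist s u :=
              le_trans h4 (Finset.inf'_le _ hs)
            omega
          have := humin x hxU
          have hle : S.inf' hS (fun s => G.dist s x) ≤ G.dist s0 x :=
            Finset.inf'_le _ hs0S
          omega
        obtain ⟨s0, hs0S, hs0⟩ := Finset.exists_mem_eq_inf' hS (fun s => G.dist s u)
        have hd3 : G.dist s0 u = 3 := by omega
        obtain ⟨p, hp⟩ := hconn.exists_walk_length_eq_dist s0 u
        have huS : u ∉ S := by
          intro h
          have := huU' u h
          simp [SimpleGraph.dist_self] at this
        refine ih (insert u S) (H ⊔ p.toSubgraph) ⟨u, Finset.mem_insert_self u S⟩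
          ?_ ?_ ?_ ?_ ?_
        · -- verts subset
          intro x hx
          simp only [Finset.coe_insert, Set.mem_insert_iff] at hx
          rcases hx with rfl | hx
          · exact Or.inr p.end_mem_verts_toSubgraph
          · exact Or.inl (hSH hx)
        · -- connected
          refine SimpleGraph.Subgraph.connected_sup hHc.preconnected p.toSubgraph_connected.preconnected ⟨s0, ?_⟩
          rw [SimpleGraph.Subgraph.verts_inf]
          exact ⟨hSH hs0S, p.start_mem_verts_toSubgraph⟩
        · -- cardinality
          have hsup : (H ⊔ p.toSubgraph).verts = H.verts ∪ (p.toSubgraph.verts \ H.verts) := by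
            rw [SimpleGraph.Subgraph.verts_sup]
            ext y; by_cases hy : y ∈ H.verts <;> simp [hy]
          have hsub : p.toSubgraph.verts \ H.verts ⊆ ↑(p.support.tail.toFinset) := by
            intro y hy
            obtain ⟨hy1, hy2⟩ := hy
            rw [SimpleGraph.Walk.mem_verts_toSubgraph] at hy1
            rw [SimpleGraph.Walk.support_eq_cons] at hy1
            rcases List.mem_cons.mp hy1 with rfl | hy1
            · exact absurd (hSH hs0S) hy2
            · simpa using hy1
          have hcard2 : (p.toSubgraph.verts \ H.verts).ncard ≤ 3 := by
            refine le_trans (Set.ncard_le_ncard hsub (Set.toFinite _)) ?_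
            rw [Set.ncard_coe_finset]
            refine le_trans (List.toFinset_card_le _) ?_
            have h4 : p.support.length = 4 := by
              rw [SimpleGraph.Walk.length_support, hp, hd3]
            have : p.support.tail.length = 3 := by
              rw [List.length_tail, h4]
            omega
          have hun := Set.ncard_union_le H.verts (p.toSubgraph.verts \ H.verts)
          rw [← hsup] at hun
          have hScard : (insert u S).card = S.card + 1 := Finset.card_insert_of_notMem huS
          have hS1 : 1 ≤ S.card := Finset.card_pos.mpr hS
          rw [hScard]
          omega
        · -- pairwise
          intro s hs t ht hst
          rcases Finset.mem_insert.mp hs with hsu | hs' <;>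
            rcases Finset.mem_insert.mp ht with htu | ht'
          · exact absurd (hsu.trans htu.symm) hst
          · subst hsu; rw [SimpleGraph.dist_comm]; exact huU' t ht'
          · subst htu; exact huU' s hs'
          · exact hpair s hs' t ht' hst
        · -- measure decreases
          have hsub : Finset.univ.filter (fun v => ∀ s ∈ insert u S, 3 ≤ G.dist s v)
              ⊆ (Finset.univ.filter (fun v => ∀ s ∈ S, 3 ≤ G.dist s v)).erase u := by
            intro v hv
            simp only [Finset.mem_filter, Finset.mem_univ, true_and] at hv
            refine Finset.mem_erase.mpr ⟨?_, ?_⟩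
            · intro h
              have := hv u (Finset.mem_insert_self u S)
              rw [h, SimpleGraph.dist_self] at this
              omega
            · simp only [Finset.mem_filter, Finset.mem_univ, true_and]
              exact fun s hs => hv s (Finset.mem_insert_of_mem hs)
          have h1 := Finset.card_erase_of_mem huU
          have h2 := Finset.card_le_card hsub
          have h3 : 1 ≤ (Finset.univ.filter (fun v => ∀ s ∈ S, 3 ≤ G.dist s v)).card :=
            Finset.card_pos.mpr ⟨u, huU⟩
          omega

private lemma two_hop_count {V : Type*} [Fintype V] [DecidableEq V] (G : SimpleGraph V)
    [DecidableRel G.Adj] (k : ℕ) (hconn : G.Connected) (hdeg : ∀ v : V, k ≤ G.degree v)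
    (S : Finset V) (hpair : ∀ s ∈ S, ∀ t ∈ S, s ≠ t → 3 ≤ G.dist s t) :
    S.card * (k + 1) ≤ Fintype.card V := by
  have hdisj : ∀ s ∈ S, ∀ t ∈ S, s ≠ t →
      Disjoint (insert s (G.neighborFinset s)) (insert t (G.neighborFinset t)) := by
    intro s hs t ht hst
    rw [Finset.disjoint_left]
    intro x hxs hxt
    have h1 : G.dist s x ≤ 1 := by
      rcases Finset.mem_insert.mp hxs with rfl | h
      · simp [SimpleGraph.dist_self]
      · rw [SimpleGraph.mem_neighborFinset] at h
        exact le_of_eq (SimpleGraph.dist_eq_one_iff_adj.mpr h)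
    have h2 : G.dist x t ≤ 1 := by
      rcases Finset.mem_insert.mp hxt with rfl | h
      · simp [SimpleGraph.dist_self]
      · rw [SimpleGraph.mem_neighborFinset] at h
        rw [SimpleGraph.dist_comm]
        exact le_of_eq (SimpleGraph.dist_eq_one_iff_adj.mpr h)
    have htr : G.dist s t ≤ G.dist s x + G.dist x t := hconn.dist_triangle
    have := hpair s hs t ht hst
    omega
  have hcardf : ∀ s : V, k + 1 ≤ (insert s (G.neighborFinset s)).card := by
    intro s
    rw [Finset.card_insert_of_notMem (SimpleGraph.notMem_neighborFinset_self G s)]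
    have := hdeg s
    rw [← SimpleGraph.card_neighborFinset_eq_degree] at this
    omega
  calc S.card * (k + 1) = ∑ _s ∈ S, (k + 1) := by rw [Finset.sum_const, smul_eq_mul]
    _ ≤ ∑ s ∈ S, (insert s (G.neighborFinset s)).card :=
        Finset.sum_le_sum (fun s _ => hcardf s)
    _ = (S.biUnion (fun s => insert s (G.neighborFinset s))).card :=
        (Finset.card_biUnion hdisj).symm
    _ ≤ Fintype.card V := Finset.card_le_univ _

/-- **Lemma (connected 2-hop dominating set).**
Let `k ≥ 1` and let `G` be a connected finite simple graph on `n ≥ 1` vertices with minimum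
degree at least `k`. Then `G` has a connected subgraph `H` with at most `3⌊n/(k+1)⌋ - 2`
vertices such that every vertex of `G` is at distance (in `G`) at most `2` from some
vertex of `H`. -/
theorem connected_two_hop_dominating_subgraph
    {V : Type*} [Fintype V] (G : SimpleGraph V) [DecidableRel G.Adj]
    (k : ℕ) (hk : 1 ≤ k) (hn : 1 ≤ Fintype.card V)
    (hconn : G.Connected) (hdeg : ∀ v : V, k ≤ G.degree v) :
    ∃ H : G.Subgraph, H.Connected ∧
      H.verts.ncard ≤ 3 * (Fintype.card V / (k + 1)) - 2 ∧
      ∀ v : V, ∃ u ∈ H.verts, G.dist u v ≤ 2 := by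
  classical
  have : Nonempty V := Fintype.card_pos_iff.mp hn
  obtain ⟨v0⟩ := this
  obtain ⟨S', H', hS', hSH', hHc', hcard', hpair', hcov'⟩ :=
    two_hop_aux G hconn (Fintype.card V) {v0} (G.singletonSubgraph v0)
      (Finset.singleton_nonempty v0)
      (by simp [SimpleGraph.singletonSubgraph])
      SimpleGraph.Subgraph.singletonSubgraph_connected
      (by simp [SimpleGraph.singletonSubgraph])
      (by simp)
      (le_trans (Finset.card_le_univ _) (le_of_eq (Finset.card_univ)))
  refine ⟨H', hHc', ?_, fun v => ?_⟩
  · have hcount := two_hop_count G k hconn hdeg S' hpair'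
    have hle : S'.card ≤ Fintype.card V / (k + 1) :=
      (Nat.le_div_iff_mul_le (Nat.succ_pos k)).mpr hcount
    calc H'.verts.ncard ≤ 3 * S'.card - 2 := hcard'
      _ ≤ 3 * (Fintype.card V / (k + 1)) - 2 :=
        Nat.sub_le_sub_right (Nat.mul_le_mul_left 3 hle) 2
  · obtain ⟨u, hu, hd⟩ := hcov' v
    exact ⟨u, hSH' hu, hd⟩
end

section
/- Let F be a connected finite simple graph on at least 4 vertices, let v be a vertex of F of degree 2 with (distinct) neighbors u and w, and let F' be the graph obtained from F by deleting v and adding the edge uw (if not already present). Then F' is connected and γ_c(F) ≤ γ_c(F') + 1. -/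
/-- `S` is a connected dominating set of `G`: the induced subgraph on `S` is connected
(hence nonempty), and every vertex of `G` is in `S` or has a neighbor in `S`. -/
def IsConnDomSet {V : Type*} (G : SimpleGraph V) (S : Set V) : Prop :=
  (G.induce S).Connected ∧ ∀ v : V, v ∈ S ∨ ∃ u ∈ S, G.Adj u v

/-- The connected domination number `γ_c(G)`: the minimum size of a connected dominating
set of `G`. -/
noncomputable def connDomNum {V : Type*} [Fintype V] (G : SimpleGraph V) : ℕ :=
  sInf {m : ℕ | ∃ S : Set V, IsConnDomSet G S ∧ S.ncard = m}

open SimpleGraph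

private lemma reachable_transfer {α β : Type*} {G : SimpleGraph α} {K : SimpleGraph β}
    (f : α → β) (hf : ∀ x y, G.Adj x y → K.Reachable (f x) (f y)) {a b : α}
    (h : G.Reachable a b) : K.Reachable (f a) (f b) := by
  obtain ⟨p⟩ := h
  induction p with
  | nil => exact Reachable.refl _
  | cons h' p ih => exact (hf _ _ h').trans ih

/-- **Claim (suppressing a degree-2 vertex).** Let `F` be a connected finite simple graph
on at least `4` vertices, let `v` have degree `2` with distinct neighbors `u` and `w`, and
let `F'` be obtained from `F` by deleting `v` and adding the edge `uw` (if not present).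
Then `F'` is connected and `γ_c(F) ≤ γ_c(F') + 1`. -/
theorem connDomNum_le_suppress_add_one
    {V : Type*} [Fintype V] [DecidableEq V] (F : SimpleGraph V) [DecidableRel F.Adj]
    (hconn : F.Connected) (h4 : 4 ≤ Fintype.card V)
    (v u w : V) (huw : u ≠ w) (hvu : F.Adj v u) (hvw : F.Adj v w)
    (hv : F.degree v = 2) :
    ((F ⊔ SimpleGraph.fromEdgeSet {s(u, w)}).induce {x : V | x ≠ v}).Connected ∧
      connDomNum F ≤
        connDomNum ((F ⊔ SimpleGraph.fromEdgeSet {s(u, w)}).induce {x : V | x ≠ v}) + 1 := by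
  classical
  set G' := F ⊔ SimpleGraph.fromEdgeSet {s(u, w)} with hG'
  set A : Set V := {x : V | x ≠ v} with hA
  set H := G'.induce A with hH
  -- the only neighbors of v are u and w
  have hnbr : ∀ x : V, F.Adj v x → x = u ∨ x = w := by
    have hsub : ({u, w} : Finset V) ⊆ F.neighborFinset v := by
      intro x hx
      rw [Finset.mem_insert, Finset.mem_singleton] at hx
      rcases hx with rfl | rfl
      · exact (F.mem_neighborFinset v x).mpr hvu
      · exact (F.mem_neighborFinset v x).mpr hvw
    have hcard : (F.neighborFinset v).card ≤ ({u, w} : Finset V).card := by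
      have h2 : ({u, w} : Finset V).card = 2 := by
        rw [Finset.card_insert_of_notMem (by simpa using huw), Finset.card_singleton]
      have h3 : (F.neighborFinset v).card = F.degree v := rfl
      rw [h2, h3, hv]
    have heq := Finset.eq_of_subset_of_card_le hsub hcard
    intro x hx
    have hx' : x ∈ ({u, w} : Finset V) := by
      rw [heq]; exact (F.mem_neighborFinset v x).mpr hx
    simpa using hx'
  have hG'cases : ∀ x y : V, G'.Adj x y → F.Adj x y ∨ ((x = u ∧ y = w) ∨ (x = w ∧ y = u)) := by
    intro x y hxy
    rcases (sup_adj _ _ _ _).mp hxy with h | h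
    · exact Or.inl h
    · obtain ⟨hmem, -⟩ := (fromEdgeSet_adj _).mp h
      rw [Set.mem_singleton_iff, Sym2.eq_iff] at hmem
      exact Or.inr hmem
  have hHadj : ∀ (a b : V) (ha : a ∈ A) (hb : b ∈ A),
      G'.Adj a b → H.Adj ⟨a, ha⟩ ⟨b, hb⟩ := fun a b ha hb hab => hab
  -- key reachability transfer for part 1
  have key : ∀ (n : ℕ) (a b : V) (ha : a ∈ A) (hb : b ∈ A) (p : F.Walk a b),
      p.length ≤ n → H.Reachable ⟨a, ha⟩ ⟨b, hb⟩ := by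
    intro n
    induction n using Nat.strong_induction_on with
    | _ n ih =>
      intro a b ha hb p hp
      cases p with
      | nil => exact Reachable.refl _
      | @cons _ c _ h q =>
        by_cases hc : c = v
        · subst hc
          cases q with
          | nil => exact absurd rfl hb
          | @cons _ d _ h2 r =>
            have hd : d ∈ A := h2.ne'
            have hlen : r.length < n := by
              simp only [Walk.length_cons] at hp; omega
            have hrest := ih r.length hlen d b hd hb r le_rfl
            have hau : a = u ∨ a = w := hnbr a h.symm
            have hdu : d = u ∨ d = w := hnbr d h2
            by_cases had : a = d
            · subst had; exact hrest
            · have hadj : G'.Adj a d := by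
                refine (sup_adj _ _ _ _).mpr (Or.inr ((fromEdgeSet_adj _).mpr ⟨?_, had⟩))
                rw [Set.mem_singleton_iff, Sym2.eq_iff]
                rcases hau with rfl | rfl <;> rcases hdu with rfl | rfl
                · exact absurd rfl had
                · exact Or.inl ⟨rfl, rfl⟩
                · exact Or.inr ⟨rfl, rfl⟩
                · exact absurd rfl had
              exact ((hHadj a d ha hd hadj).reachable).trans hrest
        · have hc' : c ∈ A := hc
          have hlen : q.length < n := by
            simp only [Walk.length_cons] at hp; omega
          exact ((hHadj a c ha hc' ((sup_adj _ _ _ _).mpr (Or.inl h))).reachable).trans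
            (ih q.length hlen c b hc' hb q le_rfl)
  have hHconn : H.Connected := by
    rw [connected_iff]
    constructor
    · rintro ⟨a, ha⟩ ⟨b, hb⟩
      obtain ⟨p⟩ := hconn.preconnected a b
      exact key p.length a b ha hb p le_rfl
    · obtain ⟨x, hx⟩ := Fintype.exists_ne_of_one_lt_card (by omega) v
      exact ⟨⟨x, hx⟩⟩
  refine ⟨hHconn, ?_⟩
  -- the whole vertex set of H is a connected dominating set, so the infimum is attained
  have hne : {m : ℕ | ∃ S : Set ↥A, IsConnDomSet H S ∧ S.ncard = m}.Nonempty := by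
    refine ⟨_, Set.univ, ⟨?_, fun x => Or.inl (Set.mem_univ x)⟩, rfl⟩
    exact ((induceUnivIso H).connected_iff).mpr hHconn
  have hmem : connDomNum H ∈ {m : ℕ | ∃ S : Set ↥A, IsConnDomSet H S ∧ S.ncard = m} :=
    Nat.sInf_mem hne
  obtain ⟨S', hS'cds, hS'card⟩ := hmem
  set T : Set V := Subtype.val '' S' with hT
  have hTcard : T.ncard = S'.ncard := Set.ncard_image_of_injective _ Subtype.val_injective
  -- reachability within T, in induced subgraphs of F
  have hreachT : ∀ (S : Set V) (hTS : T ⊆ S) (hcond : u ∈ T → w ∈ T → v ∈ S)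
      (x y : ↥A) (hx : x ∈ S') (hy : y ∈ S'),
      (F.induce S).Reachable ⟨x.1, hTS ⟨x, hx, rfl⟩⟩ ⟨y.1, hTS ⟨y, hy, rfl⟩⟩ := by
    intro S hTS hcond x y hx hy
    have hr : (H.induce S').Reachable ⟨x, hx⟩ ⟨y, hy⟩ := hS'cds.1.preconnected _ _
    exact reachable_transfer (G := H.induce S') (K := F.induce S)
      (fun z => ⟨z.1.1, hTS ⟨z.1, z.2, rfl⟩⟩)
      (by
        rintro ⟨⟨x', hx'⟩, hxs⟩ ⟨⟨y', hy'⟩, hys⟩ hadj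
        have hadj' : G'.Adj x' y' := hadj
        have hxT : x' ∈ T := ⟨_, hxs, rfl⟩
        have hyT : y' ∈ T := ⟨_, hys, rfl⟩
        rcases hG'cases _ _ hadj' with hF | hcase
        · exact (show (F.induce S).Adj ⟨x', _⟩ ⟨y', _⟩ from hF).reachable
        · have hvS : v ∈ S := by
            rcases hcase with ⟨h1, h2⟩ | ⟨h1, h2⟩
            · exact hcond (h1 ▸ hxT) (h2 ▸ hyT)
            · exact hcond (h2 ▸ hyT) (h1 ▸ hxT)
          rcases hcase with ⟨rfl, rfl⟩ | ⟨rfl, rfl⟩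
          · exact ((show (F.induce S).Adj ⟨x', _⟩ ⟨v, hvS⟩ from hvu.symm).reachable).trans
              (show (F.induce S).Adj ⟨v, hvS⟩ ⟨y', _⟩ from hvw).reachable
          · exact ((show (F.induce S).Adj ⟨x', _⟩ ⟨v, hvS⟩ from hvw.symm).reachable).trans
              (show (F.induce S).Adj ⟨v, hvS⟩ ⟨y', _⟩ from hvu).reachable) hr
  -- connectedness of `insert z₀ T` given an attachment edge
  have buildConn : ∀ (z₀ t₀ : V) (ht₀ : t₀ ∈ T) (hadj₀ : F.Adj t₀ z₀)
      (hcond : u ∈ T → w ∈ T → v ∈ insert z₀ T),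
      (F.induce (insert z₀ T)).Connected := by
    intro z₀ t₀ ht₀ hadj₀ hcond
    obtain ⟨x₀, hx₀, rfl⟩ := ht₀
    rw [connected_iff_exists_forall_reachable]
    refine ⟨⟨x₀.1, Set.mem_insert_of_mem _ ⟨x₀, hx₀, rfl⟩⟩, ?_⟩
    rintro ⟨y, hy⟩
    rcases Set.mem_insert_iff.mp hy with rfl | hyT
    · exact (show (F.induce (insert y T)).Adj ⟨x₀.1, _⟩ ⟨y, hy⟩ from hadj₀).reachable
    · obtain ⟨y', hy', rfl⟩ := hyT
      exact hreachT (insert z₀ T) (Set.subset_insert _ _) hcond x₀ y' hx₀ hy'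
  rcases em (u ∈ T ∨ w ∈ T) with hcA | hcB
  · -- case: u or w belongs to T; take S = insert v T
    obtain ⟨z, hzT, hvz⟩ : ∃ z, z ∈ T ∧ F.Adj z v := by
      rcases hcA with h | h
      exacts [⟨u, h, hvu.symm⟩, ⟨w, h, hvw.symm⟩]
    have hconnS : (F.induce (insert v T)).Connected :=
      buildConn v z hzT hvz (fun _ _ => Set.mem_insert _ _)
    have hdom : ∀ x : V, x ∈ insert v T ∨ ∃ s ∈ insert v T, F.Adj s x := by
      intro x
      by_cases hxv : x = v
      · exact Or.inl (hxv ▸ Set.mem_insert _ _)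
      · rcases hS'cds.2 ⟨x, hxv⟩ with hmem2 | ⟨s, hsS, hadj⟩
        · exact Or.inl (Set.mem_insert_of_mem _ ⟨_, hmem2, rfl⟩)
        · have hsT : s.1 ∈ T := ⟨s, hsS, rfl⟩
          rcases hG'cases _ _ (hadj : G'.Adj s.1 x) with hF | hcase
          · exact Or.inr ⟨s.1, Set.mem_insert_of_mem _ hsT, hF⟩
          · refine Or.inr ⟨v, Set.mem_insert _ _, ?_⟩
            rcases hcase with ⟨-, rfl⟩ | ⟨-, rfl⟩
            exacts [hvw, hvu]
    calc connDomNum F ≤ (insert v T).ncard := Nat.sInf_le ⟨_, ⟨hconnS, hdom⟩, rfl⟩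
      _ ≤ T.ncard + 1 := Set.ncard_insert_le _ _
      _ = connDomNum H + 1 := by rw [hTcard, hS'card]
  · -- case: neither u nor w belongs to T; take S = insert u T
    push_neg at hcB
    obtain ⟨huT, hwT⟩ := hcB
    have hu_ne : (u : V) ≠ v := hvu.ne'
    obtain ⟨s₀, hs₀S, hadj₀⟩ : ∃ s₀ ∈ S', F.Adj s₀.1 u := by
      rcases hS'cds.2 ⟨u, hu_ne⟩ with hmem2 | ⟨s, hsS, hadj⟩
      · exact absurd ⟨_, hmem2, rfl⟩ huT
      · rcases hG'cases _ _ (hadj : G'.Adj s.1 u) with hF | hcase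
        · exact ⟨s, hsS, hF⟩
        · exfalso
          rcases hcase with ⟨h1, -⟩ | ⟨h1, -⟩
          · exact huT (h1 ▸ ⟨s, hsS, rfl⟩)
          · exact hwT (h1 ▸ ⟨s, hsS, rfl⟩)
    have hconnS : (F.induce (insert u T)).Connected :=
      buildConn u s₀.1 ⟨s₀, hs₀S, rfl⟩ hadj₀ (fun h _ => absurd h huT)
    have hdom : ∀ x : V, x ∈ insert u T ∨ ∃ s ∈ insert u T, F.Adj s x := by
      intro x
      by_cases hxv : x = v
      · exact Or.inr ⟨u, Set.mem_insert _ _, hxv ▸ hvu.symm⟩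
      · rcases hS'cds.2 ⟨x, hxv⟩ with hmem2 | ⟨s, hsS, hadj⟩
        · exact Or.inl (Set.mem_insert_of_mem _ ⟨_, hmem2, rfl⟩)
        · have hsT : s.1 ∈ T := ⟨s, hsS, rfl⟩
          rcases hG'cases _ _ (hadj : G'.Adj s.1 x) with hF | hcase
          · exact Or.inr ⟨s.1, Set.mem_insert_of_mem _ hsT, hF⟩
          · exfalso
            rcases hcase with ⟨h1, -⟩ | ⟨h1, -⟩
            · exact huT (h1 ▸ hsT)
            · exact hwT (h1 ▸ hsT)
    calc connDomNum F ≤ (insert u T).ncard := Nat.sInf_le ⟨_, ⟨hconnS, hdom⟩, rfl⟩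
      _ ≤ T.ncard + 1 := Set.ncard_insert_le _ _
      _ = connDomNum H + 1 := by rw [hTcard, hS'card]
end

section
/- For every ε ∈ (0, 1] there exists a constant C = C(ε) such that the following holds: every connected finite simple graph G on n ≥ 3 vertices in which at least εn vertices have degree different from 2 satisfies γ_c(G) ≤ (1 − ε/12)·n + C. -/
set_option linter.unusedSectionVars false
set_option maxHeartbeats 1000000

open Finset

namespace CDSProof

variable {V : Type} [Fintype V] [DecidableEq V] (G : SimpleGraph V) [DecidableRel G.Adj]

def ReachIn (S : Finset V) (a b : V) : Prop :=
  ∃ p : G.Walk a b, ∀ v ∈ p.support, v ∈ S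

lemma reachIn_mono {S T : Finset V} (hST : S ⊆ T) {a b : V} (h : ReachIn G S a b) :
    ReachIn G T a b := by
  obtain ⟨p, hp⟩ := h
  exact ⟨p, fun v hv => hST (hp v hv)⟩

lemma reachIn_refl {S : Finset V} {a : V} (ha : a ∈ S) : ReachIn G S a a :=
  ⟨SimpleGraph.Walk.nil, by simp [ha]⟩

lemma reachIn_extend {S : Finset V} {v₀ s u : V} (hr : ReachIn G S v₀ s)
    (hadj : G.Adj s u) : ReachIn G (insert u S) v₀ u := by
  obtain ⟨p, hp⟩ := hr
  refine ⟨p.concat hadj, ?_⟩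
  intro v hv
  rw [SimpleGraph.Walk.support_concat] at hv
  simp only [List.concat_eq_append, List.mem_append, List.mem_singleton] at hv
  rcases hv with hv | hv
  · exact mem_insert_of_mem (hp v hv)
  · simp [hv]

lemma two_le_degree {u a b : V} (h1 : G.Adj u a) (h2 : G.Adj u b) (hab : a ≠ b) :
    2 ≤ G.degree u := by
  rw [← SimpleGraph.card_neighborFinset_eq_degree]
  have : 1 < #(G.neighborFinset u) := by
    rw [Finset.one_lt_card]
    exact ⟨a, by simpa using h1, b, by simpa using h2, hab⟩
  omega

lemma boundary {W : Finset V} {a c : V} (p : G.Walk a c) (ha : a ∈ W) (hc : c ∉ W) :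
    ∃ w ∈ W, ∃ x, x ∉ W ∧ G.Adj w x := by
  induction p with
  | nil => exact absurd ha hc
  | @cons a b c hab p ih =>
    by_cases hb : b ∈ W
    · exact ih hb hc
    · exact ⟨a, ha, b, hb, hab⟩

lemma exists_two_le_degree (hconn : G.Connected) (h3 : 3 ≤ Fintype.card V) :
    ∃ v : V, 2 ≤ G.degree v := by
  obtain ⟨a, b, hab⟩ := Fintype.exists_pair_of_one_lt_card (α := V) (by omega)
  obtain ⟨p⟩ := hconn.preconnected a b
  have hd : ∃ d, G.Adj a d := by
    cases p with
    | nil => exact absurd rfl hab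
    | cons h q => exact ⟨_, h⟩
  obtain ⟨d, had⟩ := hd
  have hthird : ∃ c, c ∉ ({a, d} : Finset V) := by
    by_contra h
    push_neg at h
    have hs : (Finset.univ : Finset V) ⊆ {a, d} := fun v _ => h v
    have h1 := Finset.card_le_card hs
    simp only [Finset.card_univ] at h1
    have h2 : #({a, d} : Finset V) ≤ 2 := Finset.card_insert_le _ _ |>.trans (by simp)
    omega
  obtain ⟨c, hc⟩ := hthird
  obtain ⟨q⟩ := hconn.preconnected a c
  obtain ⟨w, hw, x, hx, hwx⟩ := boundary G q (by simp : a ∈ ({a, d} : Finset V)) hc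
  simp only [Finset.mem_insert, Finset.mem_singleton] at hw
  simp only [Finset.mem_insert, Finset.mem_singleton, not_or] at hx
  rcases hw with rfl | rfl
  · exact ⟨w, two_le_degree G hwx had hx.2⟩
  · exact ⟨w, two_le_degree G hwx had.symm hx.1⟩

structure GInv (v₀ : V) (S L D : Finset V) : Prop where
  disj : Disjoint S L
  hv₀ : v₀ ∈ S
  conn : ∀ a ∈ S, ReachIn G S v₀ a
  dom : ∀ x ∈ L, ∃ s ∈ S, G.Adj s x
  deg2 : ∀ s ∈ S, 2 ≤ G.degree s
  DL : D ⊆ L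
  dead : ∀ d ∈ D, ∀ y, G.Adj d y → y ∈ S ∪ L
  count : #((Finset.univ.filter fun v => 3 ≤ G.degree v) ∩ (S ∪ L)) ≤ 3 * #L + #D

lemma step (hconn : G.Connected) {v₀ : V} {S L D : Finset V} (h : GInv G v₀ S L D)
    (hne : S ∪ L ≠ Finset.univ) :
    ∃ S' L' D', GInv G v₀ S' L' D' ∧ S ∪ L ⊂ S' ∪ L' := by
  classical
  set B := (Finset.univ.filter fun v => 3 ≤ G.degree v) with hB
  -- boundary edge
  obtain ⟨c, hc⟩ := Finset.exists_of_ssubset (Finset.ssubset_univ_iff.2 hne)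
  obtain ⟨p⟩ := hconn.preconnected v₀ c
  obtain ⟨w, hwW, x₀, hx₀, hwx₀⟩ := boundary G p (mem_union_left _ h.hv₀) hc.2
  by_cases hA : ∃ s ∈ S, ∃ x, x ∉ S ∪ L ∧ G.Adj s x
  · -- Case A : attach x to an internal vertex
    obtain ⟨s, hs, x, hx, hsx⟩ := hA
    have hxS : x ∉ S := fun hh => hx (mem_union_left _ hh)
    have hxL : x ∉ L := fun hh => hx (mem_union_right _ hh)
    refine ⟨S, insert x L, D, ⟨?_, h.hv₀, h.conn, ?_, h.deg2, ?_, ?_, ?_⟩, ?_⟩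
    · exact Finset.disjoint_insert_right.2 ⟨hxS, h.disj⟩
    · intro y hy
      rcases Finset.mem_insert.1 hy with rfl | hy
      · exact ⟨s, hs, hsx⟩
      · exact h.dom y hy
    · exact h.DL.trans (Finset.subset_insert _ _)
    · intro d hd y hy
      rcases Finset.mem_union.1 (h.dead d hd y hy) with h' | h'
      · exact mem_union_left _ h'
      · exact mem_union_right _ (mem_insert_of_mem h')
    · show #(B ∩ (S ∪ insert x L)) ≤ 3 * #(insert x L) + #D
      have hsub : B ∩ (S ∪ insert x L) ⊆ insert x (B ∩ (S ∪ L)) := by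
        intro v hv
        simp only [mem_inter, mem_union, mem_insert] at hv ⊢
        tauto
      have h1 := Finset.card_le_card hsub
      have h2 := Finset.card_insert_le x (B ∩ (S ∪ L))
      have h3 : #(B ∩ (S ∪ L)) ≤ 3 * #L + #D := h.count
      have h4 : #(insert x L) = #L + 1 := Finset.card_insert_of_notMem hxL
      omega
    · rw [Finset.union_insert]
      exact Finset.ssubset_insert hx
  · push_neg at hA
    have huL : w ∈ L := by
      rcases Finset.mem_union.1 hwW with h' | h'
      · exact absurd hwx₀ (hA w h' x₀ hx₀)
      · exact h'
    -- rename for clarity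
    set u := w with hu
    have hux₀ : G.Adj u x₀ := hwx₀
    obtain ⟨s, hs, hsu⟩ := h.dom u huL
    have hsx₀ : s ≠ x₀ := fun hh => hx₀ (by rw [← hh]; exact mem_union_left _ hs)
    by_cases hB1 : ∃ u' ∈ L, ∃ y, ∃ z, y ∉ S ∪ L ∧ z ∉ S ∪ L ∧ y ≠ z ∧ G.Adj u' y ∧ G.Adj u' z
    · -- Case B1 : a leaf with two outside neighbors
      obtain ⟨u', hu', y, z, hy, hz, hyz, hay, haz⟩ := hB1
      obtain ⟨s', hs', hsu'⟩ := h.dom u' hu'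
      have hu'S : u' ∉ S := fun hh => (Finset.disjoint_left.1 h.disj hh) hu'
      have hyL : y ∉ L := fun hh => hy (mem_union_right _ hh)
      have hzL : z ∉ L := fun hh => hz (mem_union_right _ hh)
      have hyS : y ∉ S := fun hh => hy (mem_union_left _ hh)
      have hzS : z ∉ S := fun hh => hz (mem_union_left _ hh)
      have hu'y : u' ≠ y := fun hh => hy (hh ▸ mem_union_right _ hu')
      have hu'z : u' ≠ z := fun hh => hz (hh ▸ mem_union_right _ hu')
      refine ⟨insert u' S, insert y (insert z (L.erase u')), D, ⟨?_, ?_, ?_, ?_, ?_, ?_, ?_, ?_⟩, ?_⟩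
      · rw [Finset.disjoint_left]
        intro a ha ha'
        simp only [mem_insert, mem_erase] at ha ha'
        rcases ha with rfl | ha
        · rcases ha' with rfl | rfl | ⟨hne', _⟩ <;> simp_all
        · rcases ha' with rfl | rfl | ⟨_, haL⟩
          · exact hyS ha
          · exact hzS ha
          · exact (Finset.disjoint_left.1 h.disj ha) haL
      · exact mem_insert_of_mem h.hv₀
      · intro a ha
        rcases Finset.mem_insert.1 ha with rfl | ha
        · exact reachIn_extend G (h.conn s' hs') hsu'
        · exact reachIn_mono G (Finset.subset_insert _ _) (h.conn a ha)
      · intro t ht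
        rcases Finset.mem_insert.1 ht with rfl | ht
        · exact ⟨u', mem_insert_self _ _, hay⟩
        rcases Finset.mem_insert.1 ht with rfl | ht
        · exact ⟨u', mem_insert_self _ _, haz⟩
        · obtain ⟨s'', hs'', ha''⟩ := h.dom t (Finset.mem_of_mem_erase ht)
          exact ⟨s'', mem_insert_of_mem hs'', ha''⟩
      · intro a ha
        rcases Finset.mem_insert.1 ha with rfl | ha
        · exact two_le_degree G hay haz hyz
        · exact h.deg2 a ha
      · intro d hd
        have hdL := h.DL hd
        have hdu' : d ≠ u' := fun hh => hy (h.dead d hd y (by rw [hh]; exact hay))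
        exact mem_insert_of_mem (mem_insert_of_mem (Finset.mem_erase.2 ⟨hdu', hdL⟩))
      · intro d hd t ht
        rcases Finset.mem_union.1 (h.dead d hd t ht) with h' | h'
        · exact mem_union_left _ (mem_insert_of_mem h')
        · by_cases htu : t = u'
          · exact htu ▸ mem_union_left _ (mem_insert_self _ _)
          · exact mem_union_right _
              (mem_insert_of_mem (mem_insert_of_mem (Finset.mem_erase.2 ⟨htu, h'⟩)))
      · show #(B ∩ (insert u' S ∪ insert y (insert z (L.erase u')))) ≤
            3 * #(insert y (insert z (L.erase u'))) + #D
        have hsub : B ∩ (insert u' S ∪ insert y (insert z (L.erase u'))) ⊆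
            insert y (insert z (B ∩ (S ∪ L))) := by
          intro v hv
          simp only [mem_inter, mem_union, mem_insert, mem_erase] at hv ⊢
          rcases hv with ⟨hvB, hv⟩
          rcases hv with (rfl | hvS) | (rfl | rfl | ⟨_, hvL⟩)
          · exact Or.inr (Or.inr ⟨hvB, Or.inr hu'⟩)
          · exact Or.inr (Or.inr ⟨hvB, Or.inl hvS⟩)
          · exact Or.inl rfl
          · exact Or.inr (Or.inl rfl)
          · exact Or.inr (Or.inr ⟨hvB, Or.inr hvL⟩)
        have h1 := Finset.card_le_card hsub
        have h2 := Finset.card_insert_le y (insert z (B ∩ (S ∪ L)))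
        have h3 := Finset.card_insert_le z (B ∩ (S ∪ L))
        have h4 : #(B ∩ (S ∪ L)) ≤ 3 * #L + #D := h.count
        have h5 : #(insert y (insert z (L.erase u'))) = #L + 1 := by
          rw [Finset.card_insert_of_notMem, Finset.card_insert_of_notMem,
            Finset.card_erase_of_mem hu']
          · have : 1 ≤ #L := Finset.card_pos.2 ⟨u', hu'⟩
            omega
          · exact fun hh => hzL (Finset.mem_of_mem_erase hh)
          · intro hh
            rcases Finset.mem_insert.1 hh with rfl | hh
            · exact hyz rfl
            · exact hyL (Finset.mem_of_mem_erase hh)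
        omega
      · rw [Finset.ssubset_iff_of_subset]
        · refine ⟨y, ?_, hy⟩
          exact mem_union_right _ (mem_insert_self _ _)
        · intro a ha
          rcases Finset.mem_union.1 ha with h' | h'
          · exact mem_union_left _ (mem_insert_of_mem h')
          · by_cases hau : a = u'
            · exact hau ▸ mem_union_left _ (mem_insert_self _ _)
            · exact mem_union_right _
                (mem_insert_of_mem (mem_insert_of_mem (Finset.mem_erase.2 ⟨hau, h'⟩)))
    · push_neg at hB1
      have hx₀L : x₀ ∉ L := fun hh => hx₀ (mem_union_right _ hh)
      have hx₀S : x₀ ∉ S := fun hh => hx₀ (mem_union_left _ hh)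
      have huS : u ∉ S := fun hh => (Finset.disjoint_left.1 h.disj hh) huL
      have hux₀ne : u ≠ x₀ := fun hh => hx₀ (hh ▸ mem_union_right _ huL)
      have hDu : u ∉ D := fun hd => hx₀ (h.dead u hd x₀ hux₀)
      by_cases hB2a : ∃ y, ∃ z, y ∉ S ∪ L ∧ z ∉ S ∪ L ∧ y ≠ z ∧ G.Adj x₀ y ∧ G.Adj x₀ z
      · -- Case B2a : extend through x₀ which has two outside neighbors
        obtain ⟨y, z, hy, hz, hyz, hay, haz⟩ := hB2a
        have hyL : y ∉ L := fun hh => hy (mem_union_right _ hh)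
        have hzL : z ∉ L := fun hh => hz (mem_union_right _ hh)
        have hyS : y ∉ S := fun hh => hy (mem_union_left _ hh)
        have hzS : z ∉ S := fun hh => hz (mem_union_left _ hh)
        have hx₀y : x₀ ≠ y := G.ne_of_adj hay
        have hx₀z : x₀ ≠ z := G.ne_of_adj haz
        have huy : u ≠ y := fun hh => hy (hh ▸ mem_union_right _ huL)
        have huz : u ≠ z := fun hh => hz (hh ▸ mem_union_right _ huL)
        refine ⟨insert x₀ (insert u S), insert y (insert z (L.erase u)), D,
          ⟨?_, ?_, ?_, ?_, ?_, ?_, ?_, ?_⟩, ?_⟩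
        · rw [Finset.disjoint_left]
          intro a ha ha'
          simp only [mem_insert, mem_erase] at ha ha'
          rcases ha with rfl | rfl | ha
          · rcases ha' with rfl | rfl | ⟨_, haL⟩
            · exact hx₀y rfl
            · exact hx₀z rfl
            · exact hx₀L haL
          · rcases ha' with rfl | rfl | ⟨hne', _⟩ <;> simp_all
          · rcases ha' with rfl | rfl | ⟨_, haL⟩
            · exact hyS ha
            · exact hzS ha
            · exact (Finset.disjoint_left.1 h.disj ha) haL
        · exact mem_insert_of_mem (mem_insert_of_mem h.hv₀)
        · intro a ha
          rcases Finset.mem_insert.1 ha with rfl | ha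
          · exact reachIn_extend G (reachIn_extend G (h.conn s hs) hsu) hux₀
          rcases Finset.mem_insert.1 ha with rfl | ha
          · exact reachIn_mono G (Finset.subset_insert _ _)
              (reachIn_extend G (h.conn s hs) hsu)
          · exact reachIn_mono G
              ((Finset.subset_insert _ _).trans (Finset.subset_insert _ _)) (h.conn a ha)
        · intro t ht
          rcases Finset.mem_insert.1 ht with rfl | ht
          · exact ⟨x₀, mem_insert_self _ _, hay⟩
          rcases Finset.mem_insert.1 ht with rfl | ht
          · exact ⟨x₀, mem_insert_self _ _, haz⟩
          · obtain ⟨s'', hs'', ha''⟩ := h.dom t (Finset.mem_of_mem_erase ht)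
            exact ⟨s'', mem_insert_of_mem (mem_insert_of_mem hs''), ha''⟩
        · intro a ha
          rcases Finset.mem_insert.1 ha with rfl | ha
          · exact two_le_degree G hay haz hyz
          rcases Finset.mem_insert.1 ha with rfl | ha
          · exact two_le_degree G hsu.symm hux₀ hsx₀
          · exact h.deg2 a ha
        · intro d hd
          have hdL := h.DL hd
          have hdu : d ≠ u := fun hh => hDu (hh ▸ hd)
          exact mem_insert_of_mem (mem_insert_of_mem (Finset.mem_erase.2 ⟨hdu, hdL⟩))
        · intro d hd t ht
          rcases Finset.mem_union.1 (h.dead d hd t ht) with h' | h'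
          · exact mem_union_left _ (mem_insert_of_mem (mem_insert_of_mem h'))
          · by_cases htu : t = u
            · exact htu ▸ mem_union_left _ (mem_insert_of_mem (mem_insert_self _ _))
            · exact mem_union_right _
                (mem_insert_of_mem (mem_insert_of_mem (Finset.mem_erase.2 ⟨htu, h'⟩)))
        · show #(B ∩ (insert x₀ (insert u S) ∪ insert y (insert z (L.erase u)))) ≤
              3 * #(insert y (insert z (L.erase u))) + #D
          have hsub : B ∩ (insert x₀ (insert u S) ∪ insert y (insert z (L.erase u))) ⊆
              insert x₀ (insert y (insert z (B ∩ (S ∪ L)))) := by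
            intro v hv
            simp only [mem_inter, mem_union, mem_insert, mem_erase] at hv ⊢
            rcases hv with ⟨hvB, hv⟩
            rcases hv with (rfl | rfl | hvS) | (rfl | rfl | ⟨_, hvL⟩)
            · exact Or.inl rfl
            · exact Or.inr (Or.inr (Or.inr ⟨hvB, Or.inr huL⟩))
            · exact Or.inr (Or.inr (Or.inr ⟨hvB, Or.inl hvS⟩))
            · exact Or.inr (Or.inl rfl)
            · exact Or.inr (Or.inr (Or.inl rfl))
            · exact Or.inr (Or.inr (Or.inr ⟨hvB, Or.inr hvL⟩))
          have h1 := Finset.card_le_card hsub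
          have h2 := Finset.card_insert_le x₀ (insert y (insert z (B ∩ (S ∪ L))))
          have h3 := Finset.card_insert_le y (insert z (B ∩ (S ∪ L)))
          have h4 := Finset.card_insert_le z (B ∩ (S ∪ L))
          have h5 : #(B ∩ (S ∪ L)) ≤ 3 * #L + #D := h.count
          have h6 : #(insert y (insert z (L.erase u))) = #L + 1 := by
            rw [Finset.card_insert_of_notMem, Finset.card_insert_of_notMem,
              Finset.card_erase_of_mem huL]
            · have : 1 ≤ #L := Finset.card_pos.2 ⟨u, huL⟩
              omega
            · exact fun hh => hzL (Finset.mem_of_mem_erase hh)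
            · intro hh
              rcases Finset.mem_insert.1 hh with rfl | hh
              · exact hyz rfl
              · exact hyL (Finset.mem_of_mem_erase hh)
          omega
        · rw [Finset.ssubset_iff_of_subset]
          · refine ⟨x₀, ?_, hx₀⟩
            exact mem_union_left _ (mem_insert_self _ _)
          · intro a ha
            rcases Finset.mem_union.1 ha with h' | h'
            · exact mem_union_left _ (mem_insert_of_mem (mem_insert_of_mem h'))
            · by_cases hau : a = u
              · exact hau ▸ mem_union_left _ (mem_insert_of_mem (mem_insert_self _ _))
              · exact mem_union_right _
                  (mem_insert_of_mem (mem_insert_of_mem (Finset.mem_erase.2 ⟨hau, h'⟩)))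
      · push_neg at hB2a
        by_cases hdx : 3 ≤ G.degree x₀
        · -- Case B2b-high : x₀ has degree ≥ 3, create a dead leaf w'
          have hucard : 3 ≤ #(G.neighborFinset x₀) := by
            rwa [SimpleGraph.card_neighborFinset_eq_degree]
          have huN : u ∈ G.neighborFinset x₀ := by simpa using hux₀.symm
          have hex : ∃ w', w' ∈ (G.neighborFinset x₀).erase u ∧ w' ∈ S ∪ L := by
            by_contra hcon
            push_neg at hcon
            have h2 : 1 < #((G.neighborFinset x₀).erase u) := by
              have := Finset.card_erase_of_mem huN
              omega
            obtain ⟨y, hy, z, hz, hyz⟩ := Finset.one_lt_card.1 h2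
            have hay : G.Adj x₀ y := by simpa using Finset.mem_of_mem_erase hy
            have haz : G.Adj x₀ z := by simpa using Finset.mem_of_mem_erase hz
            exact hB2a y z (hcon y hy) (hcon z hz) hyz hay haz
          obtain ⟨w', hw'e, hw'W⟩ := hex
          have hw'u : w' ≠ u := (Finset.mem_erase.1 hw'e).1
          have hx₀w' : G.Adj x₀ w' := by simpa using Finset.mem_of_mem_erase hw'e
          have hw'L : w' ∈ L := by
            rcases Finset.mem_union.1 hw'W with h' | h'
            · exact absurd hx₀w'.symm (hA w' h' x₀ hx₀)
            · exact h'
          have hw'D : w' ∉ D := fun hd => hx₀ (h.dead w' hd x₀ hx₀w'.symm)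
          have hdeadw' : ∀ t, G.Adj w' t → t = x₀ ∨ t ∈ S ∪ L := by
            intro t ht
            by_contra htn
            push_neg at htn
            exact hB1 w' hw'L t x₀ htn.2 hx₀ htn.1 ht hx₀w'.symm
          refine ⟨insert u S, insert x₀ (L.erase u), insert w' D,
            ⟨?_, ?_, ?_, ?_, ?_, ?_, ?_, ?_⟩, ?_⟩
          · rw [Finset.disjoint_left]
            intro a ha ha'
            simp only [mem_insert, mem_erase] at ha ha'
            rcases ha with rfl | ha
            · rcases ha' with rfl | ⟨hne', _⟩ <;> simp_all
            · rcases ha' with rfl | ⟨_, haL⟩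
              · exact hx₀S ha
              · exact (Finset.disjoint_left.1 h.disj ha) haL
          · exact mem_insert_of_mem h.hv₀
          · intro a ha
            rcases Finset.mem_insert.1 ha with rfl | ha
            · exact reachIn_extend G (h.conn s hs) hsu
            · exact reachIn_mono G (Finset.subset_insert _ _) (h.conn a ha)
          · intro t ht
            rcases Finset.mem_insert.1 ht with rfl | ht
            · exact ⟨u, mem_insert_self _ _, hux₀⟩
            · obtain ⟨s'', hs'', ha''⟩ := h.dom t (Finset.mem_of_mem_erase ht)
              exact ⟨s'', mem_insert_of_mem hs'', ha''⟩
          · intro a ha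
            rcases Finset.mem_insert.1 ha with rfl | ha
            · exact two_le_degree G hsu.symm hux₀ hsx₀
            · exact h.deg2 a ha
          · intro d hd
            rcases Finset.mem_insert.1 hd with rfl | hd
            · exact mem_insert_of_mem (Finset.mem_erase.2 ⟨hw'u, hw'L⟩)
            · have hdL := h.DL hd
              have hdu : d ≠ u := fun hh => hDu (hh ▸ hd)
              exact mem_insert_of_mem (Finset.mem_erase.2 ⟨hdu, hdL⟩)
          · intro d hd t ht
            rcases Finset.mem_insert.1 hd with rfl | hd
            · rcases hdeadw' t ht with rfl | h'
              · exact mem_union_right _ (mem_insert_self _ _)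
              · rcases Finset.mem_union.1 h' with h'' | h''
                · exact mem_union_left _ (mem_insert_of_mem h'')
                · by_cases htu : t = u
                  · exact htu ▸ mem_union_left _ (mem_insert_self _ _)
                  · exact mem_union_right _
                      (mem_insert_of_mem (Finset.mem_erase.2 ⟨htu, h''⟩))
            · rcases Finset.mem_union.1 (h.dead d hd t ht) with h' | h'
              · exact mem_union_left _ (mem_insert_of_mem h')
              · by_cases htu : t = u
                · exact htu ▸ mem_union_left _ (mem_insert_self _ _)
                · exact mem_union_right _
                    (mem_insert_of_mem (Finset.mem_erase.2 ⟨htu, h'⟩))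
          · show #(B ∩ (insert u S ∪ insert x₀ (L.erase u))) ≤
                3 * #(insert x₀ (L.erase u)) + #(insert w' D)
            have hsub : B ∩ (insert u S ∪ insert x₀ (L.erase u)) ⊆
                insert x₀ (B ∩ (S ∪ L)) := by
              intro v hv
              simp only [mem_inter, mem_union, mem_insert, mem_erase] at hv ⊢
              rcases hv with ⟨hvB, hv⟩
              rcases hv with (rfl | hvS) | (rfl | ⟨_, hvL⟩)
              · exact Or.inr ⟨hvB, Or.inr huL⟩
              · exact Or.inr ⟨hvB, Or.inl hvS⟩
              · exact Or.inl rfl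
              · exact Or.inr ⟨hvB, Or.inr hvL⟩
            have h1 := Finset.card_le_card hsub
            have h2 := Finset.card_insert_le x₀ (B ∩ (S ∪ L))
            have h3 : #(B ∩ (S ∪ L)) ≤ 3 * #L + #D := h.count
            have h4 : #(insert x₀ (L.erase u)) = #L := by
              rw [Finset.card_insert_of_notMem, Finset.card_erase_of_mem huL]
              · have : 1 ≤ #L := Finset.card_pos.2 ⟨u, huL⟩
                omega
              · exact fun hh => hx₀L (Finset.mem_of_mem_erase hh)
            have h5 : #(insert w' D) = #D + 1 := Finset.card_insert_of_notMem hw'D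
            omega
          · rw [Finset.ssubset_iff_of_subset]
            · exact ⟨x₀, mem_union_right _ (mem_insert_self _ _), hx₀⟩
            · intro a ha
              rcases Finset.mem_union.1 ha with h' | h'
              · exact mem_union_left _ (mem_insert_of_mem h')
              · by_cases hau : a = u
                · exact hau ▸ mem_union_left _ (mem_insert_self _ _)
                · exact mem_union_right _
                    (mem_insert_of_mem (Finset.mem_erase.2 ⟨hau, h'⟩))
        · -- Case B2b-low : x₀ has degree ≤ 2, simple chain extension
          refine ⟨insert u S, insert x₀ (L.erase u), D,
            ⟨?_, ?_, ?_, ?_, ?_, ?_, ?_, ?_⟩, ?_⟩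
          · rw [Finset.disjoint_left]
            intro a ha ha'
            simp only [mem_insert, mem_erase] at ha ha'
            rcases ha with rfl | ha
            · rcases ha' with rfl | ⟨hne', _⟩ <;> simp_all
            · rcases ha' with rfl | ⟨_, haL⟩
              · exact hx₀S ha
              · exact (Finset.disjoint_left.1 h.disj ha) haL
          · exact mem_insert_of_mem h.hv₀
          · intro a ha
            rcases Finset.mem_insert.1 ha with rfl | ha
            · exact reachIn_extend G (h.conn s hs) hsu
            · exact reachIn_mono G (Finset.subset_insert _ _) (h.conn a ha)
          · intro t ht
            rcases Finset.mem_insert.1 ht with rfl | ht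
            · exact ⟨u, mem_insert_self _ _, hux₀⟩
            · obtain ⟨s'', hs'', ha''⟩ := h.dom t (Finset.mem_of_mem_erase ht)
              exact ⟨s'', mem_insert_of_mem hs'', ha''⟩
          · intro a ha
            rcases Finset.mem_insert.1 ha with rfl | ha
            · exact two_le_degree G hsu.symm hux₀ hsx₀
            · exact h.deg2 a ha
          · intro d hd
            have hdL := h.DL hd
            have hdu : d ≠ u := fun hh => hDu (hh ▸ hd)
            exact mem_insert_of_mem (Finset.mem_erase.2 ⟨hdu, hdL⟩)
          · intro d hd t ht
            rcases Finset.mem_union.1 (h.dead d hd t ht) with h' | h'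
            · exact mem_union_left _ (mem_insert_of_mem h')
            · by_cases htu : t = u
              · exact htu ▸ mem_union_left _ (mem_insert_self _ _)
              · exact mem_union_right _
                  (mem_insert_of_mem (Finset.mem_erase.2 ⟨htu, h'⟩))
          · show #(B ∩ (insert u S ∪ insert x₀ (L.erase u))) ≤
                3 * #(insert x₀ (L.erase u)) + #D
            have hx₀B : x₀ ∉ B := by
              simp only [hB, mem_filter]
              tauto
            have hsub : B ∩ (insert u S ∪ insert x₀ (L.erase u)) ⊆ B ∩ (S ∪ L) := by
              intro v hv
              simp only [mem_inter, mem_union, mem_insert, mem_erase] at hv ⊢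
              rcases hv with ⟨hvB, hv⟩
              rcases hv with (rfl | hvS) | (rfl | ⟨_, hvL⟩)
              · exact ⟨hvB, Or.inr huL⟩
              · exact ⟨hvB, Or.inl hvS⟩
              · exact absurd hvB hx₀B
              · exact ⟨hvB, Or.inr hvL⟩
            have h1 := Finset.card_le_card hsub
            have h3 : #(B ∩ (S ∪ L)) ≤ 3 * #L + #D := h.count
            have h4 : #(insert x₀ (L.erase u)) = #L := by
              rw [Finset.card_insert_of_notMem, Finset.card_erase_of_mem huL]
              · have : 1 ≤ #L := Finset.card_pos.2 ⟨u, huL⟩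
                omega
              · exact fun hh => hx₀L (Finset.mem_of_mem_erase hh)
            omega
          · rw [Finset.ssubset_iff_of_subset]
            · exact ⟨x₀, mem_union_right _ (mem_insert_self _ _), hx₀⟩
            · intro a ha
              rcases Finset.mem_union.1 ha with h' | h'
              · exact mem_union_left _ (mem_insert_of_mem h')
              · by_cases hau : a = u
                · exact hau ▸ mem_union_left _ (mem_insert_self _ _)
                · exact mem_union_right _
                    (mem_insert_of_mem (Finset.mem_erase.2 ⟨hau, h'⟩))

lemma grow (hconn : G.Connected) {v₀ : V} :
    ∀ m (S L D : Finset V), GInv G v₀ S L D → #((S ∪ L)ᶜ) ≤ m →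
      ∃ S' L' D', GInv G v₀ S' L' D' ∧ S' ∪ L' = Finset.univ := by
  intro m
  induction m with
  | zero =>
    intro S L D hI hle
    have h0 : (S ∪ L)ᶜ = ∅ := Finset.card_eq_zero.1 (Nat.le_zero.1 hle)
    refine ⟨S, L, D, hI, ?_⟩
    have := congrArg (·ᶜ) h0
    simpa using this
  | succ m ih =>
    intro S L D hI hle
    by_cases hU : S ∪ L = Finset.univ
    · exact ⟨S, L, D, hI, hU⟩
    · obtain ⟨S', L', D', hI', hss⟩ := step G hconn hI hU
      apply ih S' L' D' hI'
      have h1 : #(S ∪ L) < #(S' ∪ L') := Finset.card_lt_card hss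
      have h2 := Finset.card_le_univ (S' ∪ L')
      have h3 := Finset.card_compl (S ∪ L)
      have h4 := Finset.card_compl (S' ∪ L')
      have h5 : Fintype.card V = #(Finset.univ : Finset V) := (Finset.card_univ).symm
      omega

lemma reachIn_induce {S : Finset V} :
    ∀ {a b : V} (p : G.Walk a b), (∀ v ∈ p.support, v ∈ S) →
      ∀ (ha : a ∈ (↑S : Set V)) (hb : b ∈ (↑S : Set V)),
        (G.induce (↑S : Set V)).Reachable ⟨a, ha⟩ ⟨b, hb⟩ := by
  intro a b p
  induction p with
  | nil =>
    intro _ ha hb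
    exact SimpleGraph.Reachable.refl _
  | @cons a c b hac p ih =>
    intro hsup ha hb
    have hc : c ∈ (↑S : Set V) := by
      have := hsup c (by simp)
      simpa using this
    have hadj : (G.induce (↑S : Set V)).Adj ⟨a, ha⟩ ⟨c, hc⟩ := by simpa using hac
    refine hadj.reachable.trans (ih ?_ hc hb)
    intro v hv
    exact hsup v (by simp [hv])

theorem final_bound {V : Type} [Fintype V] [DecidableEq V] (G : SimpleGraph V)
    [DecidableRel G.Adj] (hconn : G.Connected) (hcard : 3 ≤ Fintype.card V) :
    ∃ SL : Finset V × Finset V,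
      IsConnDomSet G (↑SL.1 : Set V) ∧
      #SL.1 + #SL.2 = Fintype.card V ∧
      #(Finset.univ.filter fun v : V => G.degree v ≠ 2) ≤ 12 * #SL.2 := by
  obtain ⟨v₀, hv₀deg⟩ := exists_two_le_degree G hconn hcard
  have hInit : GInv G v₀ {v₀} (G.neighborFinset v₀) ∅ := by
    refine ⟨?_, Finset.mem_singleton_self v₀, ?_, ?_, ?_, ?_, ?_, ?_⟩
    · simp [Finset.disjoint_singleton_left]
    · intro a ha
      rw [Finset.mem_singleton] at ha
      subst ha
      exact reachIn_refl G (Finset.mem_singleton_self _)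
    · intro x hx
      exact ⟨v₀, Finset.mem_singleton_self v₀, (SimpleGraph.mem_neighborFinset G v₀ x).1 hx⟩
    · intro a ha
      rw [Finset.mem_singleton] at ha
      subst ha
      exact hv₀deg
    · simp
    · simp
    · have h1 : #((Finset.univ.filter fun v => 3 ≤ G.degree v) ∩
            ({v₀} ∪ G.neighborFinset v₀)) ≤ #({v₀} ∪ G.neighborFinset v₀) :=
        Finset.card_le_card Finset.inter_subset_right
      have h2 := Finset.card_union_le ({v₀} : Finset V) (G.neighborFinset v₀)
      have h3 : #(G.neighborFinset v₀) = G.degree v₀ :=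
        SimpleGraph.card_neighborFinset_eq_degree G v₀
      simp only [Finset.card_singleton, Finset.card_empty] at *
      omega
  obtain ⟨S, L, D, hI, hSL⟩ :=
    grow G hconn (#(({v₀} ∪ G.neighborFinset v₀)ᶜ)) {v₀} (G.neighborFinset v₀) ∅ hInit le_rfl
  have hCDS : IsConnDomSet G (↑S : Set V) := by
    constructor
    · rw [SimpleGraph.connected_iff]
      constructor
      · rintro ⟨a, ha⟩ ⟨b, hb⟩
        obtain ⟨p, hp⟩ := hI.conn a (Finset.mem_coe.1 ha)
        obtain ⟨q, hq⟩ := hI.conn b (Finset.mem_coe.1 hb)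
        have hv₀S : v₀ ∈ (↑S : Set V) := Finset.mem_coe.2 hI.hv₀
        exact (reachIn_induce G p hp hv₀S ha).symm.trans (reachIn_induce G q hq hv₀S hb)
      · exact ⟨⟨v₀, Finset.mem_coe.2 hI.hv₀⟩⟩
    · intro v
      have hv : v ∈ S ∪ L := hSL ▸ Finset.mem_univ v
      rcases Finset.mem_union.1 hv with h' | h'
      · exact Or.inl (Finset.mem_coe.2 h')
      · obtain ⟨s, hs, hadj⟩ := hI.dom v h'
        exact Or.inr ⟨s, Finset.mem_coe.2 hs, hadj⟩
  refine ⟨(S, L), hCDS, ?_, ?_⟩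
  · show #S + #L = Fintype.card V
    have := Finset.card_union_of_disjoint hI.disj
    rw [hSL, Finset.card_univ] at this
    omega
  · show #(Finset.univ.filter fun v : V => G.degree v ≠ 2) ≤ 12 * #L
    have hsplit : Finset.univ.filter (fun v : V => G.degree v ≠ 2) ⊆
        Finset.univ.filter (fun v => G.degree v ≤ 1) ∪
          Finset.univ.filter (fun v => 3 ≤ G.degree v) := by
      intro v hv
      simp only [Finset.mem_filter, Finset.mem_union, Finset.mem_univ, true_and] at hv ⊢
      omega
    have h1 : #(Finset.univ.filter fun v : V => G.degree v ≠ 2) ≤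
        #(Finset.univ.filter fun v : V => G.degree v ≤ 1) +
          #(Finset.univ.filter fun v : V => 3 ≤ G.degree v) :=
      (Finset.card_le_card hsplit).trans (Finset.card_union_le _ _)
    have h2 : Finset.univ.filter (fun v : V => G.degree v ≤ 1) ⊆ L := by
      intro v hv
      simp only [Finset.mem_filter] at hv
      have hv' : v ∈ S ∪ L := hSL ▸ Finset.mem_univ v
      rcases Finset.mem_union.1 hv' with h' | h'
      · have := hI.deg2 v h'
        omega
      · exact h'
    have h3 : #(Finset.univ.filter fun v : V => G.degree v ≤ 1) ≤ #L :=
      Finset.card_le_card h2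
    have h4 : (Finset.univ.filter fun v : V => 3 ≤ G.degree v) ∩ (S ∪ L) =
        (Finset.univ.filter fun v : V => 3 ≤ G.degree v) := by
      rw [hSL, Finset.inter_univ]
    have h5 := hI.count
    rw [h4] at h5
    have h6 : #D ≤ #L := Finset.card_le_card hI.DL
    omega

end CDSProof


/-- **Theorem.** For every `ε ∈ (0,1]` there is a constant `C = C(ε)` such that every
connected finite simple graph on `n ≥ 3` vertices with at least `εn` vertices of degree
different from `2` satisfies `γ_c(G) ≤ (1 - ε/12) n + C`. -/
theorem connDomNum_le_of_many_nondegree_two :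
    ∀ ε : ℝ, 0 < ε → ε ≤ 1 → ∃ C : ℝ,
      ∀ (V : Type) [Fintype V] (G : SimpleGraph V) [DecidableRel G.Adj],
        G.Connected → 3 ≤ Fintype.card V →
        ε * Fintype.card V ≤ (Finset.univ.filter fun v : V => G.degree v ≠ 2).card →
        (connDomNum G : ℝ) ≤ (1 - ε / 12) * Fintype.card V + C := by
  intro ε hε hε1
  refine ⟨1, ?_⟩
  intro V _ G _ hconn hcard hk
  letI : DecidableEq V := Classical.decEq V
  obtain ⟨SL, hCDS, hsum, hcount⟩ := CDSProof.final_bound G hconn hcard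
  have h1 : connDomNum G ≤ #SL.1 :=
    Nat.sInf_le ⟨(↑SL.1 : Set V), hCDS, Set.ncard_coe_finset SL.1⟩
  have h2 : (connDomNum G : ℝ) ≤ (#SL.1 : ℝ) := Nat.cast_le.2 h1
  have h3 : (#SL.1 : ℝ) + (#SL.2 : ℝ) = (Fintype.card V : ℝ) := by exact_mod_cast hsum
  have h4 : (#(Finset.univ.filter fun v : V => G.degree v ≠ 2) : ℝ) ≤ 12 * (#SL.2 : ℝ) := by
    exact_mod_cast hcount
  have h5 : ε * (Fintype.card V : ℝ) ≤
      (#(Finset.univ.filter fun v : V => G.degree v ≠ 2) : ℝ) := hk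
  have h6 : (0 : ℝ) ≤ (Fintype.card V : ℝ) := Nat.cast_nonneg _
  nlinarith
end
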